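/- Let A₁,…,A_n be d×d real matrices, m > 0 and h > 0. Suppose there exists a cyclic admissible Markovian product Π of the h-discretization whose spectral radius satisfies ρ(Π) > 1. Then there exists a trajectory x of the switched system for {A₁,…,A_n} with dwell time at least m that is unbounded: sup_{t ≥ 0} ‖x(t)‖ = ∞. -/

import Mathlib

open scoped ENNReal

/-- `x : ℝ → ℝ^d` is a trajectory of the switched system for the matrices `A j` with dwell
time at least `m`: there are switching times `0 = t 0 < t 1 < ⋯` (a finite or infinite
strictly increasing sequence, consecutive gaps at least `m`, tending to `∞` if infinite,
the last interval being `[t N, ∞)` if finite) and modes `j 0, j 1, …` with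
`j (k+1) ≠ j k`, such that on each switching interval
`x s = e^{(s − t k) A (j k)} (x (t k))`. -/
def IsDwellTrajectory {d n : ℕ} (A : Fin n → Matrix (Fin d) (Fin d) ℝ) (m : ℝ)
    (x : ℝ → (Fin d → ℝ)) : Prop :=
  (∃ (N : ℕ) (t : ℕ → ℝ) (j : ℕ → Fin n),
    t 0 = 0 ∧
    (∀ k < N, m ≤ t (k + 1) - t k) ∧
    (∀ k < N, j (k + 1) ≠ j k) ∧
    (∀ k < N, ∀ s ∈ Set.Icc (t k) (t (k + 1)),
      x s = (NormedSpace.exp ((s - t k) • A (j k))).mulVec (x (t k))) ∧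
    (∀ s : ℝ, t N ≤ s →
      x s = (NormedSpace.exp ((s - t N) • A (j N))).mulVec (x (t N)))) ∨
  (∃ (t : ℕ → ℝ) (j : ℕ → Fin n),
    t 0 = 0 ∧
    (∀ k : ℕ, m ≤ t (k + 1) - t k) ∧
    Filter.Tendsto t Filter.atTop Filter.atTop ∧
    (∀ k : ℕ, j (k + 1) ≠ j k) ∧
    (∀ k : ℕ, ∀ s ∈ Set.Icc (t k) (t (k + 1)),
      x s = (NormedSpace.exp ((s - t k) • A (j k))).mulVec (x (t k))))

/-- The admissible Markovian product of the `h`-discretization determined by the modes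
`j 0, …, j (p-1)` and the exponents `N 0, …, N (p-1)`:
`Π = (e^{hA_{j_{p-1}}})^{N_{p-1}} e^{mA_{j_{p-1}}} ⋯ (e^{hA_{j_0}})^{N_0} e^{mA_{j_0}}`. -/
noncomputable def markovProd {d n : ℕ} (A : Fin n → Matrix (Fin d) (Fin d) ℝ) (m h : ℝ)
    (j : ℕ → Fin n) (N : ℕ → ℕ) (p : ℕ) : Matrix (Fin d) (Fin d) ℝ :=
  (((List.range p).map fun s =>
    (NormedSpace.exp (h • A (j s))) ^ (N s) * NormedSpace.exp (m • A (j s))).reverse).prod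


open Matrix NormedSpace

lemma exp_smul_add' {d : ℕ} (M : Matrix (Fin d) (Fin d) ℝ) (a b : ℝ) :
    exp ((a + b) • M) = exp (a • M) * exp (b • M) := by
  rw [add_smul]
  exact Matrix.exp_add_of_commute _ _ (((Commute.refl M).smul_left a).smul_right b)

lemma exp_smul_pow' {d : ℕ} (M : Matrix (Fin d) (Fin d) ℝ) (c : ℝ) (k : ℕ) :
    exp (c • M) ^ k = exp (((k : ℝ) * c) • M) := by
  rw [← Matrix.exp_nsmul, ← Nat.cast_smul_eq_nsmul ℝ, smul_smul]

/-- single factor of the Markov product is a flow of duration `m + N s * h`. -/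
lemma factor_eq {d n : ℕ} (A : Fin n → Matrix (Fin d) (Fin d) ℝ) (m h : ℝ)
    (j : ℕ → Fin n) (N : ℕ → ℕ) (s : ℕ) :
    exp ((m + (N s : ℝ) * h) • A (j s))
      = (exp (h • A (j s))) ^ (N s) * exp (m • A (j s)) := by
  rw [add_comm, exp_smul_add', exp_smul_pow']

lemma exists_unbounded_vec {d : ℕ} (M : Matrix (Fin d) (Fin d) ℝ)
    (hρ : 1 < spectralRadius ℂ (M.map (algebraMap ℝ ℂ))) :
    ∃ w : Fin d → ℝ, ∀ C : ℝ, ∃ k : ℕ, C < ‖(M ^ k) *ᵥ w‖ := by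
  classical
  set B : Matrix (Fin d) (Fin d) ℂ := M.map (algebraMap ℝ ℂ) with hB
  simp only [spectralRadius, lt_iSup_iff] at hρ
  obtain ⟨lam, hmem, hlam⟩ := hρ
  have hlam1 : (1 : ℝ) < ‖lam‖ := by
    rw [← ENNReal.coe_one, ENNReal.coe_lt_coe] at hlam
    simpa [← NNReal.coe_lt_coe] using hlam
  rw [spectrum.mem_iff] at hmem
  rw [Matrix.isUnit_iff_isUnit_det, isUnit_iff_ne_zero, not_not] at hmem
  obtain ⟨v, hv0, hveq⟩ := (Matrix.exists_mulVec_eq_zero_iff).2 hmem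
  have hBv : B *ᵥ v = lam • v := by
    have := hveq
    rw [Matrix.sub_mulVec, Algebra.algebraMap_eq_smul_one, Matrix.smul_mulVec,
      Matrix.one_mulVec, sub_eq_zero] at this
    exact this.symm
  have hBk : ∀ k : ℕ, (B ^ k) *ᵥ v = lam ^ k • v := by
    intro k
    induction k with
    | zero => simp [Matrix.one_mulVec]
    | succ k ih =>
      rw [pow_succ', ← Matrix.mulVec_mulVec, ih, Matrix.mulVec_smul, hBv, smul_smul, ← pow_succ]
  have hmap : ∀ k : ℕ, (M ^ k).map (algebraMap ℝ ℂ) = B ^ k := by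
    intro k
    have : ∀ (X : Matrix (Fin d) (Fin d) ℝ), X.map (algebraMap ℝ ℂ)
        = (algebraMap ℝ ℂ).mapMatrix X := fun X => rfl
    rw [this, map_pow, hB, this]
  obtain ⟨i, hi⟩ := Function.ne_iff.1 hv0
  set w1 : Fin d → ℝ := fun l => (v l).re with hw1
  set w2 : Fin d → ℝ := fun l => (v l).im with hw2
  have hcomp : ∀ (X : Matrix (Fin d) (Fin d) ℝ) (i : Fin d),
      ((X.map (algebraMap ℝ ℂ)) *ᵥ v) i = ⟨(X *ᵥ w1) i, (X *ᵥ w2) i⟩ := by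
    intro X i
    apply Complex.ext <;>
      simp [Matrix.mulVec, dotProduct, Complex.re_sum, Complex.im_sum,
        Complex.mul_re, Complex.mul_im, hw1, hw2]
  have key : ∀ k : ℕ, (‖lam‖) ^ k * ‖v i‖
      ≤ ‖(M ^ k) *ᵥ w1‖ + ‖(M ^ k) *ᵥ w2‖ := by
    intro k
    have h1 : ((B ^ k) *ᵥ v) i = ⟨((M ^ k) *ᵥ w1) i, ((M ^ k) *ᵥ w2) i⟩ := by
      rw [← hmap k]; exact hcomp _ i
    have h2 : ‖((B ^ k) *ᵥ v) i‖ = (‖lam‖) ^ k * ‖v i‖ := by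
      rw [hBk k]; simp [Pi.smul_apply, smul_eq_mul, _root_.map_mul, _root_.map_pow]
    rw [← h2, h1]
    refine (Complex.norm_le_abs_re_add_abs_im _).trans ?_
    gcongr
    · exact (norm_le_pi_norm ((M ^ k) *ᵥ w1) i)
    · exact (norm_le_pi_norm ((M ^ k) *ᵥ w2) i)
  by_contra hcon
  push_neg at hcon
  obtain ⟨C1, hC1⟩ := hcon w1
  obtain ⟨C2, hC2⟩ := hcon w2
  have ha : 0 < ‖v i‖ := by simpa [AbsoluteValue.pos_iff] using hi
  obtain ⟨k, hk⟩ := ((tendsto_pow_atTop_atTop_of_one_lt hlam1).eventually_gt_atTop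
    ((C1 + C2) / ‖v i‖)).exists
  have : C1 + C2 < (‖lam‖) ^ k * ‖v i‖ := by
    rwa [div_lt_iff₀ ha] at hk
  exact absurd ((key k).trans (add_le_add (hC1 k) (hC2 k))) (not_le.2 this)

lemma key_ge2 {d n : ℕ} (A : Fin n → Matrix (Fin d) (Fin d) ℝ) (m h : ℝ)
    (hm : 0 < m) (hh : 0 < h) (p : ℕ) (hp2 : 2 ≤ p) (j : ℕ → Fin n) (N : ℕ → ℕ)
    (hadm : ∀ s : ℕ, s + 1 < p → j (s + 1) ≠ j s) (hcyc : j (p - 1) ≠ j 0)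
    (w : Fin d → ℝ)
    (hw : ∀ C : ℝ, ∃ k : ℕ, C < ‖((markovProd A m h j N p) ^ k) *ᵥ w‖) :
    ∃ x : ℝ → (Fin d → ℝ), IsDwellTrajectory A m x ∧ ∀ C : ℝ, ∃ s : ℝ, 0 ≤ s ∧ C < ‖x s‖ := by
  classical
  have hp0 : 0 < p := lt_of_lt_of_le two_pos hp2
  set τ : ℕ → ℝ := fun k => m + (N (k % p) : ℝ) * h with hτ
  set J : ℕ → Fin n := fun k => j (k % p) with hJ
  set t : ℕ → ℝ := fun k => ∑ i ∈ Finset.range k, τ i with ht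
  have hτm : ∀ k, m ≤ τ k := fun k => le_add_of_nonneg_right (by positivity)
  have hτ0 : ∀ k, 0 < τ k := fun k => lt_of_lt_of_le hm (hτm k)
  have htsucc : ∀ k, t (k + 1) = t k + τ k := fun k => Finset.sum_range_succ τ k
  have htmono : StrictMono t :=
    strictMono_nat_of_lt_succ (fun k => by rw [htsucc]; linarith [hτ0 k])
  have ht0 : t 0 = 0 := Finset.sum_range_zero τ
  have htnn : ∀ k, 0 ≤ t k := fun k => by
    rw [← ht0]; exact htmono.monotone (Nat.zero_le k)
  have htlb : ∀ k : ℕ, (k : ℝ) * m ≤ t k := by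
    intro k
    calc (k : ℝ) * m = ∑ _i ∈ Finset.range k, m := by
          rw [Finset.sum_const, Finset.card_range, nsmul_eq_mul]
    _ ≤ t k := Finset.sum_le_sum (fun i _ => hτm i)
  have httop : Filter.Tendsto t Filter.atTop Filter.atTop :=
    Filter.tendsto_atTop_mono htlb
      (tendsto_natCast_atTop_atTop.atTop_mul_const hm)
  have hex : ∀ s : ℝ, ∃ k : ℕ, s < t (k + 1) := by
    intro s
    obtain ⟨k, hk⟩ := (httop.eventually_gt_atTop s).exists
    exact ⟨k, lt_of_lt_of_le hk (htmono.monotone (Nat.le_succ k))⟩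
  set K : ℝ → ℕ := fun s => Nat.find (hex s) with hK
  let v : ℕ → (Fin d → ℝ) :=
    fun k => Nat.rec w (fun k vk => (exp (τ k • A (J k))) *ᵥ vk) k
  have hvsucc : ∀ k, v (k + 1) = (exp (τ k • A (J k))) *ᵥ v k := fun k => rfl
  set x : ℝ → (Fin d → ℝ) :=
    fun s => (exp ((s - t (K s)) • A (J (K s)))) *ᵥ v (K s) with hx
  have hKeq : ∀ (k : ℕ) (s : ℝ), t k ≤ s → s < t (k + 1) → K s = k := by
    intro k s h1 h2
    rw [hK]
    rw [Nat.find_eq_iff]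
    refine ⟨h2, fun q hq hlt => absurd (le_trans (htmono.monotone hq) h1) (not_le.2 hlt)⟩
  have hxt : ∀ k, x (t k) = v k := by
    intro k
    have hk : K (t k) = k := hKeq k (t k) le_rfl (by rw [htsucc]; linarith [hτ0 k])
    rw [hx]; dsimp only
    rw [hk, sub_self, zero_smul, exp_zero, Matrix.one_mulVec]
  have hseg : ∀ k, ∀ s ∈ Set.Icc (t k) (t (k + 1)),
      x s = (exp ((s - t k) • A (J k))) *ᵥ (x (t k)) := by
    intro k s hs
    rw [hxt k]
    rcases lt_or_eq_of_le hs.2 with h2 | h2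
    · have hk : K s = k := hKeq k s hs.1 h2
      rw [hx]; dsimp only; rw [hk]
    · have hK1 : K s = k + 1 := by
        refine hKeq (k + 1) s (le_of_eq h2.symm) ?_
        rw [h2, htsucc (k + 1)]; linarith [hτ0 (k + 1)]
      rw [hx]; dsimp only
      rw [hK1, h2, sub_self, zero_smul, exp_zero, Matrix.one_mulVec, hvsucc k]
      congr 2
      rw [htsucc]; ring
  have hJne : ∀ k, J (k + 1) ≠ J k := by
    intro k
    have h1p : 1 % p = 1 := Nat.mod_eq_of_lt (lt_of_lt_of_le one_lt_two hp2)
    have hmod : (k + 1) % p = (k % p + 1) % p := by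
      conv_lhs => rw [Nat.add_mod, h1p]
    rcases Nat.lt_or_ge (k % p + 1) p with hlt | hge
    · rw [hJ]; dsimp only
      rw [hmod, Nat.mod_eq_of_lt hlt]
      exact hadm _ hlt
    · have heq : k % p + 1 = p := by
        have := Nat.mod_lt k hp0; omega
      rw [hJ]; dsimp only
      rw [hmod, heq, Nat.mod_self]
      have hk1 : k % p = p - 1 := by omega
      rw [hk1]
      exact hcyc.symm
  have hτper : ∀ k s, τ (k * p + s) = τ s := by
    intro k s; rw [hτ]; dsimp only; rw [add_comm (k * p) s, Nat.add_mul_mod_self_right]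
  have hJper : ∀ k s, J (k * p + s) = J s := by
    intro k s; rw [hJ]; dsimp only; rw [add_comm (k * p) s, Nat.add_mul_mod_self_right]
  have hvp : ∀ k r, r ≤ p → v (k * p + r)
      = ((((List.range r).map fun s =>
          (exp (h • A (j s))) ^ (N s) * exp (m • A (j s))).reverse).prod) *ᵥ v (k * p) := by
    intro k r hr
    induction r with
    | zero => simp [Matrix.one_mulVec]
    | succ r ih =>
      have hrp : r < p := Nat.lt_of_succ_le hr
      rw [show k * p + (r + 1) = (k * p + r) + 1 from by ring]
      rw [hvsucc, ih (le_of_lt hrp), Matrix.mulVec_mulVec]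
      congr 1
      have hτr : τ (k * p + r) = m + (N r : ℝ) * h := by
        rw [hτper, hτ]; dsimp only; rw [Nat.mod_eq_of_lt hrp]
      have hJr : J (k * p + r) = j r := by
        rw [hJper, hJ]; dsimp only; rw [Nat.mod_eq_of_lt hrp]
      rw [hτr, hJr, factor_eq]
      rw [List.range_succ]
      simp
  have hMP : markovProd A m h j N p = (((List.range p).map fun s =>
      (exp (h • A (j s))) ^ (N s) * exp (m • A (j s))).reverse).prod := rfl
  have hvP : ∀ k, v (k * p) = ((markovProd A m h j N p) ^ k) *ᵥ w := by
    intro k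
    induction k with
    | zero => simp [Matrix.one_mulVec]; rfl
    | succ k ih =>
      rw [show (k + 1) * p = k * p + p from by ring, hvp k p le_rfl, ih,
        Matrix.mulVec_mulVec, ← hMP, ← pow_succ']
  refine ⟨x, Or.inr ⟨t, J, ht0, fun k => by rw [htsucc]; linarith [hτm k], httop, hJne,
    fun k s hs => hseg k s hs⟩, ?_⟩
  intro C
  obtain ⟨k, hk⟩ := hw C
  refine ⟨t (k * p), htnn _, ?_⟩
  rw [hxt, hvP]
  exact hk

lemma key_one {d n : ℕ} (A : Fin n → Matrix (Fin d) (Fin d) ℝ) (m h : ℝ)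
    (hm : 0 < m) (hh : 0 < h) (j : ℕ → Fin n) (N : ℕ → ℕ)
    (w : Fin d → ℝ)
    (hw : ∀ C : ℝ, ∃ k : ℕ, C < ‖((markovProd A m h j N 1) ^ k) *ᵥ w‖) :
    ∃ x : ℝ → (Fin d → ℝ), IsDwellTrajectory A m x ∧ ∀ C : ℝ, ∃ s : ℝ, 0 ≤ s ∧ C < ‖x s‖ := by
  set T : ℝ := m + (N 0 : ℝ) * h with hT
  have hT0 : (0:ℝ) ≤ T := by positivity
  have hMP : markovProd A m h j N 1 = exp (T • A (j 0)) := by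
    rw [markovProd, hT]
    simp only [List.range_succ, List.range_zero, List.nil_append, List.map_cons, List.map_nil,
      List.reverse_cons, List.reverse_nil, List.nil_append, List.prod_cons, List.prod_nil, mul_one]
    exact (factor_eq A m h j N 0).symm
  set x : ℝ → (Fin d → ℝ) := fun s => (exp (s • A (j 0))) *ᵥ w with hx
  have hx0 : x 0 = w := by
    rw [hx]; dsimp only; rw [zero_smul, exp_zero, Matrix.one_mulVec]
  refine ⟨x, Or.inl ⟨0, (fun _ => 0), (fun _ => j 0), rfl,
    (fun k hk => absurd hk (Nat.not_lt_zero k)),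
    (fun k hk => absurd hk (Nat.not_lt_zero k)),
    (fun k hk => absurd hk (Nat.not_lt_zero k)), ?_⟩, ?_⟩
  · intro s _
    rw [sub_zero, hx0]
  · intro C
    obtain ⟨k, hk⟩ := hw C
    refine ⟨(k : ℝ) * T, by positivity, ?_⟩
    rw [hx]; dsimp only
    rw [← exp_smul_pow', ← hMP]
    exact hk


/-- **Instability direction of Corollary 2.**  If some cyclic admissible Markovian product
`Π` of the `h`-discretization has spectral radius `ρ(Π) > 1`, then the switched system
with dwell time at least `m` has an unbounded trajectory. -/
theorem unstable_of_markov_product_spectralRadius_gt_one {d n : ℕ}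
    (A : Fin n → Matrix (Fin d) (Fin d) ℝ) (m h : ℝ) (hm : 0 < m) (hh : 0 < h)
    (p : ℕ) (hp : 0 < p) (j : ℕ → Fin n) (N : ℕ → ℕ)
    (hadm : ∀ s : ℕ, s + 1 < p → j (s + 1) ≠ j s)
    (hcyc : p = 1 ∨ j (p - 1) ≠ j 0)
    (hρ : 1 < spectralRadius ℂ ((markovProd A m h j N p).map (algebraMap ℝ ℂ))) :
    ∃ x : ℝ → (Fin d → ℝ), IsDwellTrajectory A m x ∧
      ∀ C : ℝ, ∃ s : ℝ, 0 ≤ s ∧ C < ‖x s‖ := by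
  obtain ⟨w, hw⟩ := exists_unbounded_vec _ hρ
  by_cases hp1 : p = 1
  · subst hp1
    exact key_one A m h hm hh j N w hw
  · have hp2 : 2 ≤ p := by omega
    have hcyc' : j (p - 1) ≠ j 0 := hcyc.resolve_left hp1
    exact key_ge2 A m h hm hh p hp2 j N hadm hcyc' w hw
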